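/- Let n ≥ 1, let A, B ⊆ Fin n be nonempty finite sets, and let π_1, …, π_m be m independent permutations of Fin n, each chosen uniformly at random. Then the probability that min_{a ∈ A} π_t(a) = min_{b ∈ B} π_t(b) holds simultaneously for all t = 1, …, m equals J(A,B)^m, where J(A,B) = |A ∩ B| / |A ∪ B| is the Jaccard coefficient. -/

import Mathlib

open Finset Classical

section minhash_aux

variable {n : ℕ}

/-- Swapping the values at `x` and `y` moves the argmin from `x` to `y`. -/
private lemma minhash_swap_argmin {U : Finset (Fin n)} {x y : Fin n} (hy : y ∈ U)
    (π : Equiv.Perm (Fin n)) (hπ : ∀ z ∈ U, π x ≤ π z) :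
    ∀ z ∈ U, (Equiv.swap (π x) (π y) * π) y ≤ (Equiv.swap (π x) (π y) * π) z := by
  intro z hz
  have hyy : (Equiv.swap (π x) (π y) * π) y = π x := by
    simp [Equiv.Perm.mul_apply, Equiv.swap_apply_right]
  rw [hyy]
  rcases eq_or_ne z x with rfl | hzx
  · simp [Equiv.Perm.mul_apply, Equiv.swap_apply_left]
    exact hπ y hy
  rcases eq_or_ne z y with rfl | hzy
  · rw [hyy]
  · have h1 : π z ≠ π x := fun h => hzx (π.injective h)
    have h2 : π z ≠ π y := fun h => hzy (π.injective h)
    have : (Equiv.swap (π x) (π y) * π) z = π z := by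
      simp [Equiv.Perm.mul_apply, Equiv.swap_apply_of_ne_of_ne h1 h2]
    rw [this]
    exact hπ z hz

/-- The number of permutations whose minimum over `U` is attained at `x` does
not depend on `x ∈ U`. -/
private lemma minhash_card_argmin_eq (U : Finset (Fin n)) {x y : Fin n}
    (hx : x ∈ U) (hy : y ∈ U) :
    (univ.filter (fun π : Equiv.Perm (Fin n) => ∀ z ∈ U, π x ≤ π z)).card =
    (univ.filter (fun π : Equiv.Perm (Fin n) => ∀ z ∈ U, π y ≤ π z)).card := by
  classical
  apply Finset.card_bij' (fun π _ => Equiv.swap (π x) (π y) * π)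
      (fun π _ => Equiv.swap (π y) (π x) * π)
  case left_inv =>
    intro π hπ
    have h1 : (Equiv.swap (π x) (π y) * π) y = π x := by
      simp [Equiv.Perm.mul_apply, Equiv.swap_apply_right]
    have h2 : (Equiv.swap (π x) (π y) * π) x = π y := by
      simp [Equiv.Perm.mul_apply, Equiv.swap_apply_left]
    rw [h1, h2, Equiv.swap_comm, ← mul_assoc, Equiv.swap_mul_self, one_mul]
  case right_inv =>
    intro π hπ
    have h1 : (Equiv.swap (π y) (π x) * π) x = π y := by
      simp [Equiv.Perm.mul_apply, Equiv.swap_apply_right]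
    have h2 : (Equiv.swap (π y) (π x) * π) y = π x := by
      simp [Equiv.Perm.mul_apply, Equiv.swap_apply_left]
    rw [h1, h2, Equiv.swap_comm, ← mul_assoc, Equiv.swap_mul_self, one_mul]
  case hi =>
    intro π hπ
    simp only [mem_filter, mem_univ, true_and] at hπ ⊢
    exact minhash_swap_argmin hy π hπ
  case hj =>
    intro π hπ
    simp only [mem_filter, mem_univ, true_and] at hπ ⊢
    exact minhash_swap_argmin hx π hπ

/-- Single-permutation counting identity. -/
private lemma minhash_single_count (A B : Finset (Fin n)) (hA : A.Nonempty) (hB : B.Nonempty) :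
    (A ∪ B).card * (univ.filter (fun π : Equiv.Perm (Fin n) =>
        (A.image π).min' (hA.image π) = (B.image π).min' (hB.image π))).card
      = (A ∩ B).card * Nat.factorial n := by
  classical
  set U := A ∪ B with hU
  -- the collision condition is equivalent to the argmin lying in A ∩ B
  have hiff : ∀ π : Equiv.Perm (Fin n),
      ((A.image π).min' (hA.image π) = (B.image π).min' (hB.image π)) ↔
      ∃ x ∈ A ∩ B, ∀ z ∈ U, π x ≤ π z := by
    intro π
    constructor
    · intro h
      obtain ⟨a, ha, hpa⟩ := Finset.mem_image.mp ((A.image π).min'_mem (hA.image π))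
      obtain ⟨b, hb, hpb⟩ := Finset.mem_image.mp ((B.image π).min'_mem (hB.image π))
      have hab : a = b := π.injective (by rw [hpa, hpb, h])
      refine ⟨a, Finset.mem_inter.mpr ⟨ha, hab ▸ hb⟩, ?_⟩
      intro z hz
      rcases Finset.mem_union.mp hz with hzA | hzB
      · rw [hpa]; exact Finset.min'_le _ _ (Finset.mem_image_of_mem π hzA)
      · rw [hpa, h]; exact Finset.min'_le _ _ (Finset.mem_image_of_mem π hzB)
    · rintro ⟨x, hx, hmin⟩
      obtain ⟨hxA, hxB⟩ := Finset.mem_inter.mp hx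
      have hAx : (A.image π).min' (hA.image π) = π x := by
        apply le_antisymm (Finset.min'_le _ _ (Finset.mem_image_of_mem π hxA))
        obtain ⟨a, ha, hpa⟩ := Finset.mem_image.mp ((A.image π).min'_mem (hA.image π))
        rw [← hpa]; exact hmin a (Finset.mem_union_left _ ha)
      have hBx : (B.image π).min' (hB.image π) = π x := by
        apply le_antisymm (Finset.min'_le _ _ (Finset.mem_image_of_mem π hxB))
        obtain ⟨b, hb, hpb⟩ := Finset.mem_image.mp ((B.image π).min'_mem (hB.image π))
        rw [← hpb]; exact hmin b (Finset.mem_union_right _ hb)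
      rw [hAx, hBx]
  obtain ⟨x0, hx0⟩ : U.Nonempty := hA.mono Finset.subset_union_left
  set c := (univ.filter (fun π : Equiv.Perm (Fin n) => ∀ z ∈ U, π x0 ≤ π z)).card with hc
  have hdisj : ∀ (s : Finset (Fin n)), s ⊆ U → (s.biUnion (fun x =>
      univ.filter (fun π : Equiv.Perm (Fin n) => ∀ z ∈ U, π x ≤ π z))).card = s.card * c := by
    intro s hs
    rw [Finset.card_biUnion]
    · rw [Finset.sum_congr rfl (fun x hx => minhash_card_argmin_eq U (hs hx) hx0)]
      simp [mul_comm, hc]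
    · intro x hx y hy hxy
      simp only [Finset.disjoint_left, mem_filter, mem_univ, true_and]
      rintro π h1 h2
      exact hxy (π.injective (le_antisymm (h1 y (hs hy)) (h2 x (hs hx))))
  -- the good set
  have hgood : (univ.filter (fun π : Equiv.Perm (Fin n) =>
      (A.image π).min' (hA.image π) = (B.image π).min' (hB.image π)))
      = (A ∩ B).biUnion (fun x =>
        univ.filter (fun π : Equiv.Perm (Fin n) => ∀ z ∈ U, π x ≤ π z)) := by
    ext π
    simp only [mem_filter, mem_univ, true_and, Finset.mem_biUnion]
    exact hiff π
  -- the whole space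
  have hall : (univ : Finset (Equiv.Perm (Fin n)))
      = U.biUnion (fun x =>
        univ.filter (fun π : Equiv.Perm (Fin n) => ∀ z ∈ U, π x ≤ π z)) := by
    ext π
    simp only [mem_univ, Finset.mem_biUnion, mem_filter, true_iff, true_and]
    obtain ⟨x, hx, hpx⟩ := Finset.mem_image.mp ((U.image π).min'_mem ((Finset.Nonempty.image ⟨x0, hx0⟩ π)))
    refine ⟨x, hx, fun z hz => ?_⟩
    rw [hpx]
    exact Finset.min'_le _ _ (Finset.mem_image_of_mem π hz)
  have hfact : Nat.factorial n = U.card * c := by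
    have := hdisj U (le_refl U)
    rw [← hall] at this
    rw [← this]
    simp [Fintype.card_perm, Fintype.card_fin]
  rw [hgood, hdisj (A ∩ B) (Finset.inter_subset_union), hfact]
  ring

/-- Counting for products of independent conditions. -/
private lemma minhash_filter_pi_card {α : Type*} [Fintype α] (m : ℕ)
    (Q : α → Prop) [DecidablePred Q] :
    (univ.filter (fun f : Fin m → α => ∀ t, Q (f t))).card = (univ.filter Q).card ^ m := by
  classical
  rw [← Fintype.card_subtype, ← Fintype.card_subtype]
  rw [Fintype.card_congr (Equiv.subtypePiEquivPi (p := fun _ : Fin m => Q))]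
  simp [Fintype.card_pi]

end minhash_aux

/-- For `m` independent uniformly random permutations `π 0, …, π (m-1)` of
`Fin n` (a uniformly random element of the product space), the probability
that the minhash values of nonempty sets `A` and `B` agree simultaneously for
all `m` permutations equals `J(A,B)^m`, where `J(A,B) = |A ∩ B| / |A ∪ B|` is
the Jaccard coefficient. -/
theorem minhash_band_collision_prob_eq_jaccard_pow {n : ℕ} (hn : 1 ≤ n) (m : ℕ)
    (A B : Finset (Fin n)) (hA : A.Nonempty) (hB : B.Nonempty) :
    ((Finset.univ.filter (fun π : Fin m → Equiv.Perm (Fin n) =>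
        ∀ t : Fin m,
          (A.image (π t)).min' (hA.image (π t)) =
            (B.image (π t)).min' (hB.image (π t)))).card : ℚ) /
      ((Nat.factorial n : ℚ) ^ m)
    = (((A ∩ B).card : ℚ) / ((A ∪ B).card : ℚ)) ^ m := by
  classical
  have hpi := minhash_filter_pi_card (α := Equiv.Perm (Fin n)) m
    (fun π => (A.image π).min' (hA.image π) = (B.image π).min' (hB.image π))
  have hcount := minhash_single_count A B hA hB
  have hUpos : (0 : ℚ) < ((A ∪ B).card : ℚ) := by
    exact_mod_cast Finset.card_pos.mpr (hA.mono Finset.subset_union_left)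
  have hfpos : (0 : ℚ) < (Nat.factorial n : ℚ) := by
    exact_mod_cast Nat.factorial_pos n
  have hsingle : ((univ.filter (fun π : Equiv.Perm (Fin n) =>
      (A.image π).min' (hA.image π) = (B.image π).min' (hB.image π))).card : ℚ)
      / (Nat.factorial n : ℚ) = ((A ∩ B).card : ℚ) / ((A ∪ B).card : ℚ) := by
    rw [div_eq_div_iff hfpos.ne' hUpos.ne']
    exact_mod_cast (mul_comm ((A ∪ B).card) _ ▸ hcount)
  have hfilter_eq : (Finset.univ.filter (fun π : Fin m → Equiv.Perm (Fin n) =>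
        ∀ t : Fin m,
          (A.image (π t)).min' (hA.image (π t)) =
            (B.image (π t)).min' (hB.image (π t)))).card
      = (univ.filter (fun π : Equiv.Perm (Fin n) =>
          (A.image π).min' (hA.image π) = (B.image π).min' (hB.image π))).card ^ m := by
    convert hpi using 2
  rw [hfilter_eq, ← hsingle]
  push_cast
  rw [div_pow]
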